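/- arXiv:1208.4996 — 2 statements merged into one kernel-verified Lean document; each statement's English description precedes it below -/
import Mathlib

section
/- A ring R is a right V-ring if and only if every finitely generated right R-module is dual automorphism-invariant. -/
open LinearMap Submodule

/-- A submodule N of M is small (superfluous) in M:
N + K = M implies K = M for every submodule K. -/
def IsSmall {R : Type*} [Ring R] {M : Type*} [AddCommGroup M] [Module R M]
    (N : Submodule R M) : Prop :=
  ∀ K : Submodule R M, N ⊔ K = ⊤ → K = ⊤

/-- M is a dual automorphism-invariant R-module: for any two small submodules
K₁, K₂ of M, every surjective homomorphism η : M/K₁ → M/K₂ whose kernel is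
small in M/K₁ lifts to an endomorphism φ of M (i.e. π₂ ∘ φ = η ∘ π₁). -/
def IsDualAutoInv (R M : Type*) [Ring R] [AddCommGroup M] [Module R M] : Prop :=
  ∀ (K₁ K₂ : Submodule R M), IsSmall K₁ → IsSmall K₂ →
    ∀ η : (M ⧸ K₁) →ₗ[R] (M ⧸ K₂), Function.Surjective η →
      IsSmall (LinearMap.ker η) →
      ∃ φ : M →ₗ[R] M, K₂.mkQ ∘ₗ φ = η ∘ₗ K₁.mkQ

universe u

/-- R is a (right) V-ring: every simple R-module is injective. -/
def IsVRing (R : Type u) [Ring R] : Prop :=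
  ∀ (M : Type u) [AddCommGroup M] [Module R M], IsSimpleModule R M → Module.Injective R M

lemma isSmall_bot {R : Type*} [Ring R] {M : Type*} [AddCommGroup M] [Module R M] :
    IsSmall (⊥ : Submodule R M) := fun K h => by simpa using h

lemma isSmall_map_inl {R : Type*} [Ring R] {M Q : Type*} [AddCommGroup M] [Module R M]
    [AddCommGroup Q] [Module R Q] {K : Submodule R M} (hK : IsSmall K) :
    IsSmall (K.map (LinearMap.inl R M Q)) := by
  intro L hL
  have hmem : ∀ z : M × Q, z ∈ K.map (LinearMap.inl R M Q) ⊔ L := fun z => hL ▸ Submodule.mem_top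
  have hcom : L.comap (LinearMap.inl R M Q) = ⊤ := by
    apply hK
    rw [eq_top_iff]
    rintro m -
    obtain ⟨a, ha, b, hb, hab⟩ := Submodule.mem_sup.mp (hmem (m, 0))
    obtain ⟨k, hk, rfl⟩ := ha
    refine Submodule.mem_sup.mpr ⟨k, hk, m - k, ?_, by abel⟩
    have hb' : b = ((m - k, 0) : M × Q) := by
      have h1 : ((k,0) : M × Q) + b = (m, 0) := by simpa using hab
      have := eq_sub_of_add_eq' h1
      simpa [Prod.ext_iff] using this
    show LinearMap.inl R M Q (m - k) ∈ L
    have : LinearMap.inl R M Q (m - k) = ((m - k, 0) : M × Q) := by simp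
    rw [this, ← hb']; exact hb
  have hL1 : ∀ m : M, ((m, 0) : M × Q) ∈ L := fun m => by
    have hm : m ∈ L.comap (LinearMap.inl R M Q) := hcom ▸ Submodule.mem_top
    simpa using hm
  rw [eq_top_iff]
  rintro ⟨m, q⟩ -
  obtain ⟨a, ha, b, hb, hab⟩ := Submodule.mem_sup.mp (hmem (0, q))
  obtain ⟨k, hk, rfl⟩ := ha
  have h0q : ((0, q) : M × Q) ∈ L := by
    have hab' : ((k,0) : M × Q) + b = (0, q) := by simpa using hab
    rw [← hab']
    exact L.add_mem (hL1 k) hb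
  have hdec : ((m, q) : M × Q) = (m, 0) + (0, q) := by simp
  rw [hdec]; exact L.add_mem (hL1 m) h0q

lemma small_eq_bot_of_dai {R : Type v} [Ring R] {M : Type u} [AddCommGroup M] [Module R M]
    [Module.Finite R M]
    (hyp : ∀ (N : Type u) [AddCommGroup N] [Module R N], Module.Finite R N → IsDualAutoInv R N)
    (K : Submodule R M) (hK : IsSmall K) : K = ⊥ := by
  classical
  set Q := M ⧸ K with hQ
  set K₁ : Submodule R (M × Q) := K.map (LinearMap.inl R M Q) with hK₁def
  have hK₁ : IsSmall K₁ := isSmall_map_inl hK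
  have hmemK₁ : ∀ k ∈ K, ((k, 0) : M × Q) ∈ K₁ := fun k hk =>
    ⟨k, hk, by simp⟩
  -- j₁ : Q →ₗ (M × Q) ⧸ K₁  sending  K.mkQ m ↦ K₁.mkQ (m, 0)
  have hj₁ : K ≤ ker (K₁.mkQ ∘ₗ LinearMap.inl R M Q) := by
    intro k hk
    simp only [LinearMap.mem_ker, LinearMap.comp_apply, LinearMap.inl_apply, Submodule.mkQ_apply]
    exact (Submodule.Quotient.mk_eq_zero K₁).mpr (hmemK₁ k hk)
  set j₁ : Q →ₗ[R] (M × Q) ⧸ K₁ := K.liftQ (K₁.mkQ ∘ₗ LinearMap.inl R M Q) hj₁ with hj₁def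
  set j₂ : Q →ₗ[R] (M × Q) ⧸ K₁ := K₁.mkQ ∘ₗ LinearMap.inr R M Q with hj₂def
  set t : (M × Q) →ₗ[R] (M × Q) ⧸ K₁ :=
    j₁ ∘ₗ LinearMap.snd R M Q + j₂ ∘ₗ K.mkQ ∘ₗ LinearMap.fst R M Q with htdef
  have hj₁mk : ∀ m : M, j₁ (K.mkQ m) = K₁.mkQ (m, 0) := fun m => rfl
  have hj₂mk : ∀ q : Q, j₂ q = K₁.mkQ (0, q) := fun q => rfl
  have hkey : ∀ (m m' : M), t (m, K.mkQ m') = K₁.mkQ (m', K.mkQ m) := by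
    intro m m'
    have : t (m, K.mkQ m') = j₁ (K.mkQ m') + j₂ (K.mkQ m) := rfl
    rw [this, hj₁mk, hj₂mk, ← map_add]
    congr 1
    simp
  have ht : K₁ ≤ ker t := by
    rintro z hz
    obtain ⟨k, hk, rfl⟩ := hz
    have h0 : (LinearMap.inl R M Q) k = ((k, (0:Q)) : M × Q) := by simp
    rw [LinearMap.mem_ker, h0]
    have : (0 : Q) = K.mkQ 0 := by simp
    rw [this, hkey k 0]
    have hk0 : K.mkQ k = 0 := (Submodule.Quotient.mk_eq_zero K).mpr hk
    rw [hk0]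
    simp
    exact K₁.zero_mem
  set η : ((M × Q) ⧸ K₁) →ₗ[R] ((M × Q) ⧸ K₁) := K₁.liftQ t ht with hηdef
  have hηmk : ∀ z : M × Q, η (K₁.mkQ z) = t z := fun z => rfl
  have hsurj : Function.Surjective η := by
    intro z
    obtain ⟨⟨m, q⟩, rfl⟩ := K₁.mkQ_surjective z
    obtain ⟨m'', rfl⟩ := K.mkQ_surjective q
    exact ⟨K₁.mkQ (m'', K.mkQ m), by rw [hηmk, hkey]⟩
  have hker : LinearMap.ker η = ⊥ := by
    rw [eq_bot_iff]
    intro z hz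
    obtain ⟨⟨m, q⟩, rfl⟩ := K₁.mkQ_surjective z
    obtain ⟨m'', rfl⟩ := K.mkQ_surjective q
    rw [LinearMap.mem_ker, hηmk, hkey] at hz
    have hmem : ((m'', K.mkQ m) : M × Q) ∈ K₁ := (Submodule.Quotient.mk_eq_zero K₁).mp hz
    obtain ⟨k, hk, hkeq⟩ := hmem
    have h1 : k = m'' := congrArg Prod.fst hkeq
    have h2 : (0 : Q) = K.mkQ m := congrArg Prod.snd hkeq
    have hm'' : m'' ∈ K := h1 ▸ hk
    have hmK : m ∈ K := (Submodule.Quotient.mk_eq_zero K).mp h2.symm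
    have : ((m, K.mkQ m'') : M × Q) ∈ K₁ := by
      have : K.mkQ m'' = 0 := (Submodule.Quotient.mk_eq_zero K).mpr hm''
      rw [this]
      exact hmemK₁ m hmK
    simpa using (Submodule.Quotient.mk_eq_zero K₁).mpr this
  obtain ⟨φ, hφ⟩ := hyp (M × Q) inferInstance K₁ K₁ hK₁ hK₁ η hsurj
    (by rw [hker]; exact isSmall_bot)
  set g : Q →ₗ[R] M := LinearMap.fst R M Q ∘ₗ φ ∘ₗ LinearMap.inr R M Q with hgdef
  have hg : ∀ m : M, K.mkQ (g (K.mkQ m)) = K.mkQ m := by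
    intro m
    have h1 : K₁.mkQ (φ (0, K.mkQ m)) = η (K₁.mkQ (0, K.mkQ m)) := by
      have := LinearMap.congr_fun hφ ((0 : M), K.mkQ m)
      simpa using this
    rw [hηmk, hkey] at h1
    have h2 : ((φ (0, K.mkQ m)) - (m, 0) : M × Q) ∈ K₁ := by
      have heq : K₁.mkQ ((φ (0, K.mkQ m)) - (m, 0)) = 0 := by
        rw [map_sub, h1, sub_eq_zero]
        congr 2
      exact (Submodule.Quotient.mk_eq_zero K₁).mp heq
    obtain ⟨k, hk, hkeq⟩ := h2
    have h3 : k = (φ (0, K.mkQ m)).1 - m := by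
      have := congrArg Prod.fst hkeq
      simpa using this
    have h4 : g (K.mkQ m) = (φ (0, K.mkQ m)).1 := rfl
    rw [h4]
    have hmemk : (φ (0, K.mkQ m)).1 - m ∈ K := h3 ▸ hk
    have hz : K.mkQ ((φ (0, K.mkQ m)).1 - m) = 0 :=
      (Submodule.Quotient.mk_eq_zero K).mpr hmemk
    rw [map_sub] at hz
    exact sub_eq_zero.mp hz
  have hsup : K ⊔ LinearMap.range g = ⊤ := by
    rw [eq_top_iff]
    rintro m -
    refine Submodule.mem_sup.mpr ⟨m - g (K.mkQ m), ?_, g (K.mkQ m), ⟨K.mkQ m, rfl⟩, by abel⟩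
    have : K.mkQ (m - g (K.mkQ m)) = 0 := by rw [map_sub, hg, sub_self]
    exact (Submodule.Quotient.mk_eq_zero K).mp this
  have hrange : LinearMap.range g = ⊤ := hK _ hsup
  rw [eq_bot_iff]
  intro k hk
  have : k ∈ LinearMap.range g := hrange ▸ Submodule.mem_top
  obtain ⟨q, hq⟩ := this
  obtain ⟨m, rfl⟩ := K.mkQ_surjective q
  have h5 : K.mkQ (g (K.mkQ m)) = K.mkQ m := hg m
  rw [hq] at h5
  have hk0 : K.mkQ k = 0 := (Submodule.Quotient.mk_eq_zero K).mpr hk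
  rw [hk0] at h5
  have : K.mkQ m = 0 := h5.symm
  have hmq : (K.mkQ m : Q) = 0 := this
  rw [Submodule.mem_bot, ← hq, hmq, map_zero]

lemma baer_of_small_eq_bot (R : Type u) [Ring R]
    (hsmall : ∀ (M : Type u) [AddCommGroup M] [Module R M], Module.Finite R M →
      ∀ K : Submodule R M, IsSmall K → K = ⊥)
    (S : Type u) [AddCommGroup S] [Module R S] (hS : IsSimpleModule R S) :
    Module.Baer R S := by
  intro I f
  by_cases hf0 : f = 0
  · exact ⟨0, fun x hx => by simp [hf0]⟩
  -- f is surjective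
  have hfsurj : Function.Surjective f := by
    rw [← LinearMap.range_eq_top]
    rcases eq_bot_or_eq_top (LinearMap.range f) with h | h
    · exact absurd (LinearMap.range_eq_bot.mp h) hf0
    · exact h
  -- an element where f is nonzero
  have hex : ∃ x : I, f x ≠ 0 := by
    by_contra h
    push_neg at h
    exact hf0 (by ext y; simp [h y])
  obtain ⟨⟨x, hxI⟩, hfx⟩ := hex
  set K₀ : Ideal R := (LinearMap.ker f).map I.subtype with hK₀def
  have hK₀I : K₀ ≤ I := by
    rintro y ⟨z, hz, rfl⟩; exact z.2
  have hK₀ker : ∀ y (hy : y ∈ I), y ∈ K₀ ↔ f ⟨y, hy⟩ = 0 := by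
    intro y hy
    constructor
    · rintro ⟨z, hz, hzy⟩
      have : z = ⟨y, hy⟩ := Subtype.ext hzy
      rw [← this]; exact hz
    · intro h; exact ⟨⟨y, hy⟩, h, rfl⟩
  -- there is a maximal ideal containing K₀ but not x
  have hLex : ∃ L : Ideal R, L.IsMaximal ∧ K₀ ≤ L ∧ x ∉ L := by
    by_contra hcon
    push_neg at hcon
    -- then span of (mkQ x) is small in R ⧸ K₀
    have hW : IsSmall (Submodule.span R {K₀.mkQ x}) := by
      intro L' hL'
      by_contra hne
      have h1L' : K₀.mkQ 1 ∉ L' := by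
        intro h1
        apply hne
        rw [eq_top_iff]
        intro z _
        obtain ⟨r, rfl⟩ := K₀.mkQ_surjective z
        have : K₀.mkQ r = r • K₀.mkQ 1 := by
          rw [← map_smul]; congr 1; simp [smul_eq_mul]
        rw [this]
        exact L'.smul_mem r h1
      have hmk1 : K₀.mkQ 1 ∈ Submodule.span R {K₀.mkQ x} ⊔ L' := by rw [hL']; trivial
      obtain ⟨a, ha, b, hb, hab⟩ := Submodule.mem_sup.mp hmk1
      obtain ⟨r, hr⟩ := Submodule.mem_span_singleton.mp ha
      set L'' : Ideal R := L'.comap K₀.mkQ with hL''def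
      have hbL : (1 : R) - r * x ∈ L'' := by
        have : K₀.mkQ (1 - r * x) = b := by
          rw [map_sub, ← hab, ← hr, ← map_smul]
          simp [smul_eq_mul]
        show K₀.mkQ (1 - r * x) ∈ L'
        rw [this]; exact hb
      have hL''ne : L'' ≠ ⊤ := by
        intro h
        apply h1L'
        have : (1:R) ∈ L'' := h ▸ trivial
        exact this
      obtain ⟨𝔪, h𝔪, hL''𝔪⟩ := Ideal.exists_le_maximal L'' hL''ne
      have hK₀𝔪 : K₀ ≤ 𝔪 := le_trans (fun y hy => by
        show K₀.mkQ y ∈ L'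
        have : K₀.mkQ y = 0 := (Submodule.Quotient.mk_eq_zero K₀).mpr hy
        rw [this]; exact L'.zero_mem) hL''𝔪
      have hx𝔪 : x ∈ 𝔪 := hcon 𝔪 h𝔪 hK₀𝔪
      have : (1 : R) ∈ 𝔪 := by
        have h1 : (1 : R) = (1 - r * x) + r * x := by abel
        rw [h1]
        exact 𝔪.add_mem (hL''𝔪 hbL) (𝔪.mul_mem_left r hx𝔪)
      exact h𝔪.ne_top (Ideal.eq_top_of_isUnit_mem _ this isUnit_one)
    have hWbot := hsmall (R ⧸ K₀) inferInstance _ hW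
    have : K₀.mkQ x = 0 := by
      have : K₀.mkQ x ∈ Submodule.span R {K₀.mkQ x} := Submodule.mem_span_singleton_self _
      rw [hWbot] at this
      simpa using this
    have : x ∈ K₀ := (Submodule.Quotient.mk_eq_zero K₀).mp this
    exact hfx ((hK₀ker x hxI).mp this)
  obtain ⟨L, hLmax, hK₀L, hxL⟩ := hLex
  -- I ⊓ L ≤ K₀
  have hIL : I ⊓ L ≤ K₀ := by
    set T : Submodule R S := Submodule.map f (Submodule.comap I.subtype L) with hTdef
    rcases eq_bot_or_eq_top T with hT | hT
    · intro y hy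
      have : f ⟨y, hy.1⟩ ∈ T := ⟨⟨y, hy.1⟩, hy.2, rfl⟩
      rw [hT] at this
      exact (hK₀ker y hy.1).mpr (by simpa using this)
    · exfalso
      have : f ⟨x, hxI⟩ ∈ T := hT ▸ trivial
      obtain ⟨z, hz, hzeq⟩ := this
      have hsub : (⟨x, hxI⟩ - z : I) ∈ LinearMap.ker f := by
        rw [LinearMap.mem_ker, map_sub, hzeq, sub_self]
      have hxz : x - (z : R) ∈ K₀ := ⟨_, hsub, rfl⟩
      have : x = (x - (z : R)) + (z : R) := by abel
      rw [this] at hxL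
      exact hxL (L.add_mem (hK₀L hxz) hz)
  -- I ⊔ L = ⊤
  have hsupIL : I ⊔ L = ⊤ := by
    have hcoatom : IsCoatom L := hLmax.out
    exact hcoatom.2 _ (lt_of_le_of_ne le_sup_right
      (fun h => hxL (by rw [h]; exact Submodule.mem_sup_left hxI)))
  -- build the extension
  set p : (I × L) →ₗ[R] R := LinearMap.coprod I.subtype L.subtype with hpdef
  have hpsurj : Function.Surjective p := by
    rw [← LinearMap.range_eq_top, hpdef, LinearMap.range_coprod,
      Submodule.range_subtype, Submodule.range_subtype]
    exact hsupIL
  have hkerp : ∀ z ∈ LinearMap.ker p, (f ∘ₗ LinearMap.fst R I L) z = 0 := by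
    rintro ⟨a, b⟩ hz
    have hab : (a : R) + (b : R) = 0 := hz
    have haL : (a : R) ∈ L := by
      have : (a : R) = -(b : R) := eq_neg_of_add_eq_zero_left hab
      rw [this]; exact L.neg_mem b.2
    have haK₀ : (a : R) ∈ K₀ := hIL ⟨a.2, haL⟩
    show f a = 0
    have := (hK₀ker (a : R) a.2).mp haK₀
    simpa using this
  set e := p.quotKerEquivOfSurjective hpsurj with hedef
  set F : R →ₗ[R] S :=
    ((LinearMap.ker p).liftQ (f ∘ₗ LinearMap.fst R I L) hkerp) ∘ₗ e.symm.toLinearMap with hFdef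
  refine ⟨F, fun y hy => ?_⟩
  have h1 : e.symm y = (LinearMap.ker p).mkQ (⟨⟨y, hy⟩, 0⟩ : I × L) := by
    rw [LinearEquiv.symm_apply_eq]
    have he : e ((LinearMap.ker p).mkQ (⟨⟨y, hy⟩, 0⟩ : I × L)) = p (⟨⟨y, hy⟩, 0⟩ : I × L) := rfl
    rw [he]
    simp [hpdef]
  show F y = f ⟨y, hy⟩
  rw [hFdef]
  simp only [LinearMap.comp_apply, LinearEquiv.coe_toLinearMap]
  rw [h1]
  show (f ∘ₗ LinearMap.fst R I L) (⟨⟨y, hy⟩, 0⟩ : I × L) = f ⟨y, hy⟩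
  rfl

lemma small_eq_bot_of_vring {R : Type u} [Ring R] (hV : IsVRing R)
    {M : Type u} [AddCommGroup M] [Module R M] (K : Submodule R M) (hK : IsSmall K) :
    K = ⊥ := by
  rw [eq_bot_iff]
  intro x hx
  rw [Submodule.mem_bot]
  by_contra hx0
  set t : R →ₗ[R] M := LinearMap.toSpanSingleton R M x with htdef
  have ht1 : t 1 = x := by simp [htdef]
  have hJ : LinearMap.ker t ≠ ⊤ := by
    intro h
    have h1 : (1:R) ∈ LinearMap.ker t := h ▸ trivial
    have : t 1 = 0 := h1
    rw [ht1] at this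
    exact hx0 this
  obtain ⟨𝔪, h𝔪, hJ𝔪⟩ := Ideal.exists_le_maximal _ hJ
  have hsimple : IsSimpleModule R (R ⧸ 𝔪) := isSimpleModule_iff_isCoatom.mpr h𝔪.out
  have hinj : Module.Injective R (R ⧸ 𝔪) := hV _ hsimple
  set C := Submodule.span R {x} with hCdef
  have htmem : ∀ r : R, t r ∈ C := fun r =>
    C.smul_mem r (Submodule.mem_span_singleton_self x)
  set t' : R →ₗ[R] C := t.codRestrict C htmem with ht'def
  have ht'surj : Function.Surjective t' := by
    rintro ⟨c, hc⟩
    obtain ⟨r, hr⟩ := Submodule.mem_span_singleton.mp hc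
    exact ⟨r, Subtype.ext hr⟩
  have hkert' : LinearMap.ker t' ≤ LinearMap.ker (𝔪.mkQ) := by
    intro r hr
    have h0 : t' r = 0 := hr
    have : t r = 0 := congrArg Subtype.val h0
    have hrJ : r ∈ LinearMap.ker t := this
    rw [Submodule.ker_mkQ]
    exact hJ𝔪 hrJ
  set e := t'.quotKerEquivOfSurjective ht'surj with hedef
  set g : C →ₗ[R] (R ⧸ 𝔪) :=
    ((LinearMap.ker t').liftQ 𝔪.mkQ hkert') ∘ₗ e.symm.toLinearMap with hgdef
  obtain ⟨h, hh⟩ := hinj.out C.subtype (Submodule.injective_subtype C) g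
  have hxC : x ∈ C := Submodule.mem_span_singleton_self x
  have hx' : h x ≠ 0 := by
    have h1 : h x = g ⟨x, hxC⟩ := hh ⟨x, hxC⟩
    have h2 : (⟨x, hxC⟩ : C) = t' 1 := Subtype.ext ht1.symm
    have h3 : e.symm (t' 1) = (LinearMap.ker t').mkQ 1 := by
      rw [LinearEquiv.symm_apply_eq]
      rfl
    rw [h1, h2, hgdef]
    simp only [LinearMap.comp_apply, LinearEquiv.coe_toLinearMap]
    rw [h3]
    have h4 : ((LinearMap.ker t').liftQ 𝔪.mkQ hkert') ((LinearMap.ker t').mkQ 1) = 𝔪.mkQ 1 := rfl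
    rw [h4]
    intro hcon
    have : (1 : R) ∈ 𝔪 := (Submodule.Quotient.mk_eq_zero 𝔪).mp hcon
    exact h𝔪.ne_top (Ideal.eq_top_of_isUnit_mem _ this isUnit_one)
  haveI := hsimple
  have hspan : Submodule.span R {h x} = ⊤ := by
    rcases hsimple.eq_bot_or_eq_top (Submodule.span R {h x}) with hsp | hsp
    · exfalso
      apply hx'
      have : h x ∈ Submodule.span R {h x} := Submodule.mem_span_singleton_self (h x)
      rw [hsp] at this
      simpa using this
    · exact hsp
  have hsup : K ⊔ LinearMap.ker h = ⊤ := by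
    rw [eq_top_iff]
    rintro m -
    have hm : h m ∈ Submodule.span R {h x} := hspan ▸ trivial
    obtain ⟨r, hr⟩ := Submodule.mem_span_singleton.mp hm
    refine Submodule.mem_sup.mpr ⟨r • x, K.smul_mem r hx, m - r • x, ?_, by abel⟩
    rw [LinearMap.mem_ker, map_sub, map_smul, hr, sub_self]
  have hkertop := hK _ hsup
  apply hx'
  have : x ∈ LinearMap.ker h := hkertop ▸ trivial
  exact this

/-- R is a V-ring iff every finitely generated R-module is dual automorphism-invariant. -/
theorem isVRing_iff_finitelyGenerated_dualAutoInv (R : Type u) [Ring R] :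
    IsVRing R ↔
      ∀ (M : Type u) [AddCommGroup M] [Module R M],
        Module.Finite R M → IsDualAutoInv R M := by
  constructor
  · intro hV M _ _ _fin
    intro K₁ K₂ h1 h2 η hsurj hker
    have hK₂ : K₂ = ⊥ := small_eq_bot_of_vring hV K₂ h2
    set e₂ := K₂.quotEquivOfEqBot hK₂ with he₂def
    refine ⟨e₂.toLinearMap ∘ₗ η ∘ₗ K₁.mkQ, ?_⟩
    ext m
    show K₂.mkQ (e₂ (η (K₁.mkQ m))) = η (K₁.mkQ m)
    obtain ⟨m', hm'⟩ := K₂.mkQ_surjective (η (K₁.mkQ m))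
    rw [← hm']
    have hmk : e₂ (K₂.mkQ m') = m' := Submodule.quotEquivOfEqBot_apply_mk K₂ hK₂ m'
    rw [hmk]
  · intro hyp S _ _ hS
    exact (baer_of_small_eq_bot R
      (fun M _ _ hfin K hK => by
        haveI := hfin
        exact small_eq_bot_of_dai hyp K hK) S hS).injective
end

section
/- Let P be a projective right R-module that has no nonzero small submodule, and let M be a quasi-projective right R-module such that Hom_R(M/K, P) = 0 for every small submodule K of M. Then P ⊕ M is dual automorphism-invariant. -/
open LinearMap Submodule

/-- M is quasi-projective: every homomorphism M → M/N lifts to an endomorphism of M. -/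
def IsQuasiProjective (R M : Type*) [Ring R] [AddCommGroup M] [Module R M] : Prop :=
  ∀ (N : Submodule R M) (φ : M →ₗ[R] M ⧸ N), ∃ ψ : M →ₗ[R] M, N.mkQ ∘ₗ ψ = φ

/-- Image of a small submodule under a surjective map is small. -/
lemma isSmall_map {R M M' : Type*} [Ring R] [AddCommGroup M] [Module R M]
    [AddCommGroup M'] [Module R M'] (f : M →ₗ[R] M') (hf : Function.Surjective f)
    {N : Submodule R M} (hN : IsSmall N) : IsSmall (N.map f) := by
  intro K hK
  have h1 : N ⊔ K.comap f = ⊤ := by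
    rw [eq_top_iff]
    intro x _
    have hx : f x ∈ N.map f ⊔ K := by rw [hK]; trivial
    rcases Submodule.mem_sup.mp hx with ⟨n', hn', k, hk, hnk⟩
    rcases hn' with ⟨n, hn, rfl⟩
    have hxk : x - n ∈ K.comap f := by
      simp only [Submodule.mem_comap, map_sub]
      have : f x - f n = k := by rw [← hnk]; abel
      rw [this]; exact hk
    have : x = n + (x - n) := by abel
    rw [this]
    exact Submodule.add_mem_sup hn hxk
  have h2 := hN _ h1
  rw [← Submodule.map_comap_eq_of_surjective hf K, h2, Submodule.map_top,
    LinearMap.range_eq_top.mpr hf]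

/-- If P is projective with no nonzero small submodule and M is quasi-projective with
Hom(M/K, P) = 0 for every small submodule K of M, then P ⊕ M is
dual automorphism-invariant. -/
theorem projective_quasiProjective_prod_dualAutoInv
    {R P M : Type*} [Ring R] [AddCommGroup P] [Module R P]
    [AddCommGroup M] [Module R M]
    (hP : Module.Projective R P)
    (hPsmall : ∀ N : Submodule R P, IsSmall N → N = ⊥)
    (hM : IsQuasiProjective R M)
    (hHom : ∀ K : Submodule R M, IsSmall K → ∀ f : (M ⧸ K) →ₗ[R] P, f = 0) :
    IsDualAutoInv R (P × M) := by
  haveI := hP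
  intro K₁ K₂ hK₁ hK₂ η hηsurj hηker
  have hfst : Function.Surjective (LinearMap.fst R P M) := fun p => ⟨(p, 0), rfl⟩
  have hsnd : Function.Surjective (LinearMap.snd R P M) := fun m => ⟨(0, m), rfl⟩
  have hK₁fst : K₁.map (LinearMap.fst R P M) = ⊥ := hPsmall _ (isSmall_map _ hfst hK₁)
  have hK₂fst : K₂.map (LinearMap.fst R P M) = ⊥ := hPsmall _ (isSmall_map _ hfst hK₂)
  set K₁' := K₁.map (LinearMap.snd R P M) with hK₁'def
  set K₂' := K₂.map (LinearMap.snd R P M) with hK₂'def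
  have hK₁'small : IsSmall K₁' := isSmall_map _ hsnd hK₁
  have hK₂'small : IsSmall K₂' := isSmall_map _ hsnd hK₂
  -- elements of K₁', K₂' sit inside K₁, K₂
  have hmem : ∀ (K : Submodule R (P × M)), K.map (LinearMap.fst R P M) = ⊥ →
      ∀ m ∈ K.map (LinearMap.snd R P M), ((0 : P), m) ∈ K := by
    intro K hKfst m hm
    rcases hm with ⟨x, hx, rfl⟩
    have h1 : x.1 = 0 := by
      have : x.1 ∈ K.map (LinearMap.fst R P M) := ⟨x, hx, rfl⟩
      rw [hKfst] at this; simpa using this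
    have : x = ((0 : P), x.2) := by
      ext
      · exact h1
      · rfl
    show ((0 : P), x.2) ∈ K
    rwa [← this]
  have hmemK₁ : ∀ m ∈ K₁', ((0 : P), m) ∈ K₁ := hmem K₁ hK₁fst
  have hmemK₂ : ∀ m ∈ K₂', ((0 : P), m) ∈ K₂ := hmem K₂ hK₂fst
  -- the two "coordinate" maps on (P × M) ⧸ K₂
  have hker1 : K₂ ≤ LinearMap.ker (LinearMap.fst R P M) := by
    intro x hx
    have : x.1 ∈ K₂.map (LinearMap.fst R P M) := ⟨x, hx, rfl⟩
    rw [hK₂fst] at this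
    simpa [LinearMap.mem_ker] using this
  set fstbar : ((P × M) ⧸ K₂) →ₗ[R] P := K₂.liftQ (LinearMap.fst R P M) hker1 with hfstbar
  have hker2 : K₂ ≤ LinearMap.ker (K₂'.mkQ ∘ₗ LinearMap.snd R P M) := by
    intro x hx
    simp only [LinearMap.mem_ker, LinearMap.comp_apply, Submodule.mkQ_apply,
      Submodule.Quotient.mk_eq_zero]
    exact ⟨x, hx, rfl⟩
  set sndbar : ((P × M) ⧸ K₂) →ₗ[R] M ⧸ K₂' :=
    K₂.liftQ (K₂'.mkQ ∘ₗ LinearMap.snd R P M) hker2 with hsndbar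
  -- (fstbar, sndbar) jointly injective
  have hinj : ∀ x y : (P × M) ⧸ K₂, fstbar x = fstbar y → sndbar x = sndbar y → x = y := by
    intro x y h₁ h₂
    obtain ⟨a, rfl⟩ := K₂.mkQ_surjective x
    obtain ⟨b, rfl⟩ := K₂.mkQ_surjective y
    simp only [Submodule.mkQ_apply, hfstbar, hsndbar, Submodule.liftQ_apply,
      LinearMap.comp_apply, LinearMap.fst_apply, LinearMap.snd_apply,
      Submodule.mkQ_apply] at h₁ h₂
    rw [Submodule.Quotient.eq] at h₂
    simp only [Submodule.mkQ_apply]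
    rw [Submodule.Quotient.eq]
    have : a - b = ((0 : P), a.2 - b.2) := by
      ext
      · simpa [h₁] using sub_self a.1
      · rfl
    rw [this]
    exact hmemK₂ _ h₂
  -- lift on the P coordinate via projectivity
  obtain ⟨α, hα⟩ := Module.projective_lifting_property K₂.mkQ
    (η ∘ₗ K₁.mkQ ∘ₗ LinearMap.inl R P M) K₂.mkQ_surjective
  -- the map from M
  set g : M →ₗ[R] (P × M) ⧸ K₂ := η ∘ₗ K₁.mkQ ∘ₗ LinearMap.inr R P M with hg
  have hgker : K₁' ≤ LinearMap.ker g := by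
    intro m hm
    have : ((0 : P), m) ∈ K₁ := hmemK₁ m hm
    simp only [hg, LinearMap.mem_ker, LinearMap.comp_apply, LinearMap.inr_apply,
      Submodule.mkQ_apply]
    rw [(Submodule.Quotient.mk_eq_zero K₁).mpr this, map_zero]
  set gbar : (M ⧸ K₁') →ₗ[R] (P × M) ⧸ K₂ := K₁'.liftQ g hgker with hgbar
  have hgbar_eq : ∀ m : M, gbar (K₁'.mkQ m) = g m := fun m => rfl
  -- the P-component of gbar vanishes
  have h0 : fstbar ∘ₗ gbar = 0 := hHom K₁' hK₁'small _
  -- lift on the M coordinate via quasi-projectivity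
  obtain ⟨β₂, hβ₂⟩ := hM K₂' (sndbar ∘ₗ g)
  -- assemble
  refine ⟨α ∘ₗ LinearMap.fst R P M +
    (LinearMap.inr R P M ∘ₗ β₂) ∘ₗ LinearMap.snd R P M, ?_⟩
  apply LinearMap.ext
  rintro ⟨p, m⟩
  have hsplit : ((p, m) : P × M) = (p, 0) + (0, m) := by simp
  simp only [LinearMap.comp_apply, LinearMap.add_apply, LinearMap.fst_apply,
    LinearMap.snd_apply, LinearMap.inr_apply, map_add, Submodule.mkQ_apply]
  have lhs1 : K₂.mkQ (α p) = η (K₁.mkQ ((p, 0) : P × M)) := by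
    have := LinearMap.congr_fun hα p
    simpa [LinearMap.comp_apply] using this
  have key : K₂.mkQ (((0 : P), β₂ m) : P × M) = g m := by
    apply hinj
    · have h1 : fstbar (K₂.mkQ (((0 : P), β₂ m) : P × M)) = 0 := by
        simp [hfstbar]
      have h2 : fstbar (g m) = 0 := by
        have := LinearMap.congr_fun h0 (K₁'.mkQ m)
        rw [LinearMap.comp_apply, hgbar_eq, LinearMap.zero_apply] at this
        exact this
      rw [h1, h2]
    · have h1 : sndbar (K₂.mkQ (((0 : P), β₂ m) : P × M)) = K₂'.mkQ (β₂ m) := by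
        simp [hsndbar]
      have h2 := LinearMap.congr_fun hβ₂ m
      simp only [LinearMap.comp_apply] at h2
      rw [h1, h2]
  have rhs : η (Submodule.Quotient.mk ((p, m) : P × M)) =
      η (K₁.mkQ ((p, 0) : P × M)) + g m := by
    rw [show ((p, m) : P × M) = (p, 0) + (0, m) from hsplit]
    simp only [Submodule.mkQ_apply, Submodule.Quotient.mk_add, map_add, hg,
      LinearMap.comp_apply, LinearMap.inr_apply]
  rw [rhs, ← lhs1, ← key]
  rfl
end
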